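/- arXiv:0810.4240 — 4 statements merged into one kernel-verified Lean document; each statement's English description precedes it below -/
import Mathlib

section
/- Let A and B be sets and let h : A × B → ℂ satisfy sup_{a∈A}|h(a,b)| < ∞ for each fixed b ∈ B and sup_{b∈B}|h(a,b)| < ∞ for each fixed a ∈ A. Define d_A(a₁,a₂) := sup_{b∈B}|h(a₁,b) − h(a₂,b)| and d_B(b₁,b₂) := sup_{a∈A}|h(a,b₁) − h(a,b₂)|. Then (A,d_A) and (B,d_B) are semimetric spaces, and (A,d_A) is totally bounded if and only if (B,d_B) is totally bounded. -/
private lemma bdd_aux {A B : Type*} (h : A → B → ℂ)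
    (hrow : ∀ a : A, ∃ M : ℝ, ∀ b : B, ‖h a b‖ ≤ M) (a₁ a₂ : A) :
    BddAbove (Set.range fun b => ‖h a₁ b - h a₂ b‖) := by
  obtain ⟨M₁, hM₁⟩ := hrow a₁
  obtain ⟨M₂, hM₂⟩ := hrow a₂
  refine ⟨M₁ + M₂, ?_⟩
  rintro x ⟨b, rfl⟩
  calc ‖h a₁ b - h a₂ b‖ ≤ ‖h a₁ b‖ + ‖h a₂ b‖ := by
        exact norm_sub_le (h a₁ b) (h a₂ b)
    _ ≤ M₁ + M₂ := add_le_add (hM₁ b) (hM₂ b)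

private lemma semi_aux {A B : Type*} (h : A → B → ℂ)
    (hrow : ∀ a : A, ∃ M : ℝ, ∀ b : B, ‖h a b‖ ≤ M)
    (dA : A → A → ℝ)
    (hdA : ∀ a₁ a₂ : A, dA a₁ a₂ = ⨆ b : B, ‖h a₁ b - h a₂ b‖) :
    (∀ a : A, dA a a = 0) ∧ (∀ a₁ a₂ : A, 0 ≤ dA a₁ a₂) ∧
      (∀ a₁ a₂ : A, dA a₁ a₂ = dA a₂ a₁) ∧
      (∀ a₁ a₂ a₃ : A, dA a₁ a₃ ≤ dA a₁ a₂ + dA a₂ a₃) := by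
  refine ⟨?_, ?_, ?_, ?_⟩
  · intro a
    rw [hdA]
    simp only [sub_self, norm_zero]
    rcases isEmpty_or_nonempty B with hB | hB
    · exact Real.iSup_of_isEmpty _
    · exact ciSup_const
  · intro a₁ a₂
    rw [hdA]
    exact Real.iSup_nonneg fun b => (norm_nonneg _)
  · intro a₁ a₂
    rw [hdA, hdA]
    congr 1
    ext b
    exact norm_sub_rev _ _
  · intro a₁ a₂ a₃
    rw [hdA, hdA, hdA]
    rcases isEmpty_or_nonempty B with hB | hB
    · simp [Real.iSup_of_isEmpty]
    apply ciSup_le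
    intro b
    calc ‖h a₁ b - h a₃ b‖
        ≤ ‖h a₁ b - h a₂ b‖ + ‖h a₂ b - h a₃ b‖ :=
          norm_sub_le_norm_sub_add_norm_sub _ _ _
      _ ≤ _ := add_le_add (le_ciSup (bdd_aux h hrow a₁ a₂) b)
          (le_ciSup (bdd_aux h hrow a₂ a₃) b)

private lemma transfer_aux {A B : Type*} (h : A → B → ℂ)
    (hcol : ∀ b : B, ∃ M : ℝ, ∀ a : A, ‖h a b‖ ≤ M)
    (hrow : ∀ a : A, ∃ M : ℝ, ∀ b : B, ‖h a b‖ ≤ M)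
    (dA : A → A → ℝ) (dB : B → B → ℝ)
    (hdA : ∀ a₁ a₂ : A, dA a₁ a₂ = ⨆ b : B, ‖h a₁ b - h a₂ b‖)
    (hdB : ∀ b₁ b₂ : B, dB b₁ b₂ = ⨆ a : A, ‖h a b₁ - h a b₂‖)
    (tb : ∀ ε : ℝ, 0 < ε → ∃ F : Finset A, ∀ a : A, ∃ a' ∈ F, dA a a' ≤ ε) :
    ∀ ε : ℝ, 0 < ε → ∃ G : Finset B, ∀ b : B, ∃ b' ∈ G, dB b b' ≤ ε := by
  intro ε hε
  rcases isEmpty_or_nonempty B with hB | hB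
  · exact ⟨∅, fun b => hB.elim b⟩
  rcases isEmpty_or_nonempty A with hA | hA
  · obtain ⟨b₀⟩ := hB
    refine ⟨{b₀}, fun b => ⟨b₀, Finset.mem_singleton_self _, ?_⟩⟩
    rw [hdB, Real.iSup_of_isEmpty]
    exact hε.le
  obtain ⟨F, hF⟩ := tb (ε/3) (by positivity)
  set φ : B → (F → ℂ) := fun b a => h a b with hφ
  choose M hM using fun a : F => hrow (a : A)
  obtain ⟨C, hC⟩ := Finite.exists_le M
  have htb : TotallyBounded (Set.range φ) := by
    refine TotallyBounded.subset ?_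
      (isCompact_closedBall (0 : F → ℂ) (max C 0)).totallyBounded
    rintro _ ⟨b, rfl⟩
    rw [Metric.mem_closedBall, dist_pi_le_iff (le_max_right C 0)]
    intro a
    simp only [Pi.zero_apply, Complex.dist_eq, sub_zero, hφ]
    exact le_trans (hM a b) (le_trans (hC a) (le_max_left _ _))
  obtain ⟨t, hts, htfin, hcov⟩ := totallyBounded_iff_subset.mp htb _
    (Metric.dist_mem_uniformity (show (0:ℝ) < ε/3 by positivity))
  have hsel : ∀ y : t, ∃ b : B, φ b = (y : F → ℂ) := fun y => hts y.2
  choose f hf using hsel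
  classical
  refine ⟨htfin.toFinset.attach.image
    (fun y => f ⟨y.1, (Set.Finite.mem_toFinset htfin).mp y.2⟩), fun b => ?_⟩
  have hbmem := hcov (Set.mem_range_self b)
  simp only [Set.mem_iUnion] at hbmem
  obtain ⟨y, hyt, hby⟩ := hbmem
  have hby' : dist (φ b) y < ε / 3 := hby
  set b' : B := f ⟨y, hyt⟩ with hb'
  have hfb' : φ b' = y := hf ⟨y, hyt⟩
  refine ⟨b', ?_, ?_⟩
  · apply Finset.mem_image.mpr
    exact ⟨⟨y, (Set.Finite.mem_toFinset htfin).mpr hyt⟩, Finset.mem_attach _ _, rfl⟩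
  · rw [hdB]
    apply ciSup_le
    intro a
    obtain ⟨a', ha'F, ha'⟩ := hF a
    have h1 : ‖h a b - h a' b‖ ≤ ε / 3 := by
      refine le_trans (le_ciSup (bdd_aux h hrow a a') b) ?_
      rw [← hdA]; exact ha'
    have h3 : ‖h a b' - h a' b'‖ ≤ ε / 3 := by
      refine le_trans (le_ciSup (bdd_aux h hrow a a') b') ?_
      rw [← hdA]; exact ha'
    have h2 : ‖h a' b - h a' b'‖ ≤ ε / 3 := by
      have := dist_le_pi_dist (φ b) y ⟨a', ha'F⟩
      rw [← hfb'] at this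
      have : dist (φ b ⟨a', ha'F⟩) (φ b' ⟨a', ha'F⟩) < ε / 3 := lt_of_le_of_lt this (by
        rw [hfb']; exact hby')
      simp only [hφ, Complex.dist_eq] at this
      exact this.le
    calc ‖h a b - h a b'‖
        ≤ ‖h a b - h a' b‖ + ‖h a' b - h a b'‖ :=
          norm_sub_le_norm_sub_add_norm_sub _ _ _
      _ ≤ ‖h a b - h a' b‖ +
          (‖h a' b - h a' b'‖ + ‖h a' b' - h a b'‖) :=
          add_le_add_right (norm_sub_le_norm_sub_add_norm_sub _ _ _) _
      _ = ‖h a b - h a' b‖ +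
          (‖h a' b - h a' b'‖ + ‖h a b' - h a' b'‖) := by
          rw [norm_sub_rev (h a' b') (h a b')]
      _ ≤ ε/3 + (ε/3 + ε/3) := add_le_add h1 (add_le_add h2 h3)
      _ = ε := by ring

/-- Let `A` and `B` be sets and `h : A × B → ℂ` be bounded in each
variable separately.  Define `d_A(a₁,a₂) := sup_{b∈B} |h(a₁,b) − h(a₂,b)|` and
`d_B(b₁,b₂) := sup_{a∈A} |h(a,b₁) − h(a,b₂)|`.  Then `(A, d_A)` and `(B, d_B)` are
semimetric spaces, and `(A, d_A)` is totally bounded iff `(B, d_B)` is totally bounded. -/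
theorem statement0 {A B : Type*} (h : A → B → ℂ)
    (hcol : ∀ b : B, ∃ M : ℝ, ∀ a : A, ‖h a b‖ ≤ M)
    (hrow : ∀ a : A, ∃ M : ℝ, ∀ b : B, ‖h a b‖ ≤ M)
    (dA : A → A → ℝ) (dB : B → B → ℝ)
    (hdA : ∀ a₁ a₂ : A, dA a₁ a₂ = ⨆ b : B, ‖h a₁ b - h a₂ b‖)
    (hdB : ∀ b₁ b₂ : B, dB b₁ b₂ = ⨆ a : A, ‖h a b₁ - h a b₂‖) :
    -- `(A, d_A)` is a semimetric space
    ((∀ a : A, dA a a = 0) ∧ (∀ a₁ a₂ : A, 0 ≤ dA a₁ a₂) ∧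
      (∀ a₁ a₂ : A, dA a₁ a₂ = dA a₂ a₁) ∧
      (∀ a₁ a₂ a₃ : A, dA a₁ a₃ ≤ dA a₁ a₂ + dA a₂ a₃)) ∧
    -- `(B, d_B)` is a semimetric space
    ((∀ b : B, dB b b = 0) ∧ (∀ b₁ b₂ : B, 0 ≤ dB b₁ b₂) ∧
      (∀ b₁ b₂ : B, dB b₁ b₂ = dB b₂ b₁) ∧
      (∀ b₁ b₂ b₃ : B, dB b₁ b₃ ≤ dB b₁ b₂ + dB b₂ b₃)) ∧
    -- `(A, d_A)` is totally bounded iff `(B, d_B)` is totally bounded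
    ((∀ ε : ℝ, 0 < ε → ∃ F : Finset A, ∀ a : A, ∃ a' ∈ F, dA a a' ≤ ε) ↔
      (∀ ε : ℝ, 0 < ε → ∃ F : Finset B, ∀ b : B, ∃ b' ∈ F, dB b b' ≤ ε)) := by
  refine ⟨semi_aux h hrow dA hdA, semi_aux (fun b a => h a b) hcol dB hdB, ?_, ?_⟩
  · exact transfer_aux h hcol hrow dA dB hdA hdB
  · exact transfer_aux (fun b a => h a b) hrow hcol dB dA hdB hdA
end

section
/- Let A and B be sets and let h : A × B → ℂ satisfy sup_{a∈A}|h(a,b)| < ∞ for each fixed b ∈ B and sup_{b∈B}|h(a,b)| < ∞ for each fixed a ∈ A, and define the semimetrics d_A(a₁,a₂) := sup_{b∈B}|h(a₁,b) − h(a₂,b)| on A and d_B(b₁,b₂) := sup_{a∈A}|h(a,b₁) − h(a,b₂)| on B. If the intrinsic covering number N_A(ε) is finite for some ε > 0, then the diameter covering number N_B^Δ(ρ) is finite for every ρ > ε. -/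
/-- The intrinsic covering number `N_S(ε)` of a subset `S` of a semimetric space
`(E, d)`: the least cardinality of a finite set `F ⊆ S` such that every point of `S`
is within distance `ε` of some point of `F`; `∞` if no such finite set exists. -/
noncomputable def icov {E : Type*} (d : E → E → ℝ) (S : Set E) (ε : ℝ) : ℕ∞ :=
  sInf ((fun F : Finset E => (F.card : ℕ∞)) ''
    {F : Finset E | ↑F ⊆ S ∧ ∀ x ∈ S, ∃ y ∈ F, d x y ≤ ε})

/-- The diameter covering number `N_S^Δ(ε)`: the least number of subsets, each of
diameter at most `2ε`, needed to cover `S`; `∞` if no finite such cover exists. -/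
noncomputable def dcov {E : Type*} (d : E → E → ℝ) (S : Set E) (ε : ℝ) : ℕ∞ :=
  sInf ((fun k : ℕ => (k : ℕ∞)) ''
    {k : ℕ | ∃ G : Fin k → Set E,
      (∀ i, ∀ x ∈ G i, ∀ y ∈ G i, d x y ≤ 2 * ε) ∧ S ⊆ ⋃ i, G i})

/-- Let `h : A × B → ℂ` be bounded in each variable separately, with the
semimetrics `d_A(a₁,a₂) := sup_{b∈B} |h(a₁,b) − h(a₂,b)|` on `A` and
`d_B(b₁,b₂) := sup_{a∈A} |h(a,b₁) − h(a,b₂)|` on `B`.  If the intrinsic covering number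
`N_A(ε)` is finite for some `ε > 0`, then the diameter covering number `N_B^Δ(ρ)` is
finite for every `ρ > ε`. -/
theorem statement2 {A B : Type*} (h : A → B → ℂ)
    (hcol : ∀ b : B, ∃ M : ℝ, ∀ a : A, ‖h a b‖ ≤ M)
    (hrow : ∀ a : A, ∃ M : ℝ, ∀ b : B, ‖h a b‖ ≤ M)
    (dA : A → A → ℝ) (dB : B → B → ℝ)
    (hdA : ∀ a₁ a₂ : A, dA a₁ a₂ = ⨆ b : B, ‖h a₁ b - h a₂ b‖)
    (hdB : ∀ b₁ b₂ : B, dB b₁ b₂ = ⨆ a : A, ‖h a b₁ - h a b₂‖)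
    (ε : ℝ) (hε : 0 < ε)
    (hfin : icov dA Set.univ ε ≠ ⊤) :
    ∀ ρ : ℝ, ε < ρ → dcov dB Set.univ ρ ≠ ⊤ := by
  intro ρ hρ
  classical
  -- extract a finite ε-net F of A
  have hne : {F : Finset A | ↑F ⊆ (Set.univ : Set A) ∧
      ∀ x ∈ (Set.univ : Set A), ∃ y ∈ F, dA x y ≤ ε}.Nonempty := by
    by_contra hcon
    rw [Set.not_nonempty_iff_eq_empty] at hcon
    exact hfin (by rw [icov, hcon, Set.image_empty, sInf_empty])
  obtain ⟨F, -, hFnet⟩ := hne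
  choose M hM using hrow
  set δ : ℝ := ρ - ε with hδdef
  have hδ : 0 < δ := by simp only [hδdef]; linarith
  set φ : B → (F → ℂ) := fun b a' => h a' b with hφ
  have hK : Set.range φ ⊆ Set.univ.pi (fun a' : F => Metric.closedBall (0 : ℂ) (M a')) := by
    rintro _ ⟨b, rfl⟩ a' -
    simpa [Metric.mem_closedBall, Complex.dist_eq] using hM a' b
  have hcpt : IsCompact (Set.univ.pi (fun a' : F => Metric.closedBall (0 : ℂ) (M a'))) :=
    isCompact_univ_pi (fun a' => isCompact_closedBall _ _)
  have htb : TotallyBounded (Set.range φ) := hcpt.totallyBounded.subset hK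
  obtain ⟨t, htfin, ht⟩ := (Metric.totallyBounded_iff.mp htb) δ hδ
  set tF : Finset (F → ℂ) := htfin.toFinset with htF
  set e := tF.equivFin with he
  set k : ℕ := tF.card with hk
  set G : Fin k → Set B := fun i => {b | φ b ∈ Metric.ball ((e.symm i : tF) : F → ℂ) δ} with hG
  -- the sup defining dA bounds each coordinate
  have hbdd : ∀ a a' : A, ∀ b : B, ‖h a b - h a' b‖ ≤ dA a a' := by
    intro a a' b
    rw [hdA]
    refine le_ciSup (f := fun b => ‖h a b - h a' b‖) ?_ b
    refine ⟨M a + M a', ?_⟩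
    rintro _ ⟨b', rfl⟩
    calc ‖h a b' - h a' b'‖ ≤ ‖h a b'‖ + ‖h a' b'‖ := by
          simpa using norm_sub_le (h a b') (h a' b')
      _ ≤ M a + M a' := add_le_add (hM a b') (hM a' b')
  have hdiam : ∀ i, ∀ x ∈ G i, ∀ y ∈ G i, dB x y ≤ 2 * ρ := by
    intro i b₁ hb₁ b₂ hb₂
    rw [hdB]
    refine Real.iSup_le (fun a => ?_) (by linarith)
    obtain ⟨a', ha'F, ha'⟩ := hFnet a (Set.mem_univ a)
    have hmid : ‖h a' b₁ - h a' b₂‖ ≤ 2 * δ := by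
      have h1 : dist (φ b₁ ⟨a', ha'F⟩) (φ b₂ ⟨a', ha'F⟩) ≤ dist (φ b₁) (φ b₂) :=
        dist_le_pi_dist (φ b₁) (φ b₂) _
      have h2 : dist (φ b₁) (φ b₂) ≤ dist (φ b₁) ((e.symm i : tF) : F → ℂ)
          + dist ((e.symm i : tF) : F → ℂ) (φ b₂) := dist_triangle _ _ _
      have h3 : dist (φ b₁) ((e.symm i : tF) : F → ℂ) < δ := by
        simpa [hG, Metric.mem_ball] using hb₁
      have h4 : dist ((e.symm i : tF) : F → ℂ) (φ b₂) < δ := by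
        rw [dist_comm]; simpa [hG, Metric.mem_ball] using hb₂
      have : dist (φ b₁ ⟨a', ha'F⟩) (φ b₂ ⟨a', ha'F⟩) ≤ 2 * δ := by linarith
      simpa [hφ, Complex.dist_eq] using this
    have tri : ‖h a b₁ - h a b₂‖ ≤ ‖h a b₁ - h a' b₁‖
        + (‖h a' b₁ - h a' b₂‖ + ‖h a' b₂ - h a b₂‖) := by
      simpa using
        norm_sub_le_norm_sub_add_norm_sub (h a b₁) (h a' b₁) (h a b₂) |>.trans
          (add_le_add_right (norm_sub_le_norm_sub_add_norm_sub (h a' b₁) (h a' b₂) (h a b₂)) _)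
    have t1 : ‖h a b₁ - h a' b₁‖ ≤ ε := (hbdd a a' b₁).trans ha'
    have t3 : ‖h a' b₂ - h a b₂‖ ≤ ε := by
      rw [norm_sub_rev]
      exact (hbdd a a' b₂).trans ha'
    have : ‖h a b₁ - h a b₂‖ ≤ ε + 2 * δ + ε := by linarith
    simpa only [hδdef] using this.trans (by linarith)
  have hcover : (Set.univ : Set B) ⊆ ⋃ i, G i := by
    intro b _
    have : φ b ∈ ⋃ y ∈ t, Metric.ball y δ := ht ⟨b, rfl⟩
    simp only [Set.mem_iUnion] at this ⊢
    obtain ⟨y, hyt, hy⟩ := this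
    have hytF : y ∈ tF := htfin.mem_toFinset.mpr hyt
    refine ⟨e ⟨y, hytF⟩, ?_⟩
    simp only [hG, Set.mem_setOf_eq, Equiv.symm_apply_apply]
    exact hy
  have hmem : (k : ℕ∞) ∈ ((fun k : ℕ => (k : ℕ∞)) ''
      {k : ℕ | ∃ G : Fin k → Set B,
        (∀ i, ∀ x ∈ G i, ∀ y ∈ G i, dB x y ≤ 2 * ρ) ∧ (Set.univ : Set B) ⊆ ⋃ i, G i}) :=
    ⟨k, ⟨G, hdiam, hcover⟩, rfl⟩
  have hle : dcov dB Set.univ ρ ≤ (k : ℕ∞) := sInf_le hmem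
  exact ne_top_of_le_ne_top (by simp) hle
end

section
/- Let A and B be sets and let h : A × B → ℂ satisfy sup_{a∈A}|h(a,b)| < ∞ for each fixed b ∈ B and sup_{b∈B}|h(a,b)| < ∞ for each fixed a ∈ A, and define the semimetrics d_A(a₁,a₂) := sup_{b∈B}|h(a₁,b) − h(a₂,b)| on A and d_B(b₁,b₂) := sup_{a∈A}|h(a,b₁) − h(a,b₂)| on B. If the intrinsic covering number N_A(ε) is finite for some ε > 0, then the intrinsic covering number N_B(ρ) is finite for every ρ > 2ε. -/
/-- Let `h : A × B → ℂ` be bounded in each variable separately, with the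
semimetrics `d_A(a₁,a₂) := sup_{b∈B} |h(a₁,b) − h(a₂,b)|` on `A` and
`d_B(b₁,b₂) := sup_{a∈A} |h(a,b₁) − h(a,b₂)|` on `B`.  If the intrinsic covering number
`N_A(ε)` is finite for some `ε > 0`, then the intrinsic covering number `N_B(ρ)` is
finite for every `ρ > 2ε`. -/
theorem statement6 {A B : Type*} (h : A → B → ℂ)
    (hcol : ∀ b : B, ∃ M : ℝ, ∀ a : A, ‖h a b‖ ≤ M)
    (hrow : ∀ a : A, ∃ M : ℝ, ∀ b : B, ‖h a b‖ ≤ M)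
    (dA : A → A → ℝ) (dB : B → B → ℝ)
    (hdA : ∀ a₁ a₂ : A, dA a₁ a₂ = ⨆ b : B, ‖h a₁ b - h a₂ b‖)
    (hdB : ∀ b₁ b₂ : B, dB b₁ b₂ = ⨆ a : A, ‖h a b₁ - h a b₂‖)
    (ε : ℝ) (hε : 0 < ε)
    (hfin : icov dA Set.univ ε ≠ ⊤) :
    ∀ ρ : ℝ, 2 * ε < ρ → icov dB Set.univ ρ ≠ ⊤ := by
  classical
  intro ρ hρ
  -- extract a finite ε-net F for A
  have hne : {F : Finset A | (↑F : Set A) ⊆ Set.univ ∧ ∀ x ∈ Set.univ, ∃ y ∈ F, dA x y ≤ ε}.Nonempty := by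
    by_contra hcon
    rw [Set.not_nonempty_iff_eq_empty] at hcon
    apply hfin
    unfold icov
    rw [hcon, Set.image_empty, sInf_empty]
  obtain ⟨F, -, hF⟩ := hne
  choose M hM using hrow
  set δ := ρ - 2 * ε with hδdef
  have hδ : 0 < δ := by simp only [hδdef]; linarith
  set φ : B → (F → ℂ) := fun b a => h a b with hφ
  -- the range of φ is totally bounded
  have hK : TotallyBounded (Set.range φ) := by
    refine TotallyBounded.subset (s₂ := Set.pi Set.univ fun a : F => Metric.closedBall (0 : ℂ) (M a.1)) ?_ ?_
    · rintro _ ⟨b, rfl⟩ a _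
      simpa [Complex.dist_eq] using hM a b
    · exact (isCompact_univ_pi fun (a : F) => isCompact_closedBall 0 (M a.1)).totallyBounded
  obtain ⟨t, hts, htfin, htcov⟩ := (totallyBounded_iff_subset.mp hK)
    {p : (F → ℂ) × (F → ℂ) | dist p.1 p.2 < δ} (Metric.dist_mem_uniformity hδ)
  have hg : ∀ y ∈ t, ∃ b : B, φ b = y := fun y hy => hts hy
  choose g hgspec using hg
  let T : Finset (F → ℂ) := htfin.toFinset
  have hT : ∀ y ∈ T, y ∈ t := fun y hy => htfin.mem_toFinset.mp hy
  let G : Finset B := T.attach.image (fun y => g y.1 (hT y.1 y.2))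
  have key : ∀ b : B, ∃ b' ∈ G, dB b b' ≤ ρ := by
    intro b
    have hb : φ b ∈ ⋃ y ∈ t, {x | (x, y) ∈ {p : (F → ℂ) × (F → ℂ) | dist p.1 p.2 < δ}} :=
      htcov (Set.mem_range_self b)
    simp only [Set.mem_iUnion, Set.mem_setOf_eq] at hb
    obtain ⟨y, hy, hdy⟩ := hb
    refine ⟨g y hy, ?_, ?_⟩
    · refine Finset.mem_image.mpr ⟨⟨y, htfin.mem_toFinset.mpr hy⟩, Finset.mem_attach _ _, rfl⟩
    · set b' := g y hy with hb'
      have hφb' : φ b' = y := hgspec y hy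
      have hdist : dist (φ b) (φ b') < δ := by rw [hφb']; exact hdy
      rw [hdB]
      refine Real.iSup_le ?_ (by linarith)
      intro a
      obtain ⟨a', ha'F, ha'⟩ := hF a (Set.mem_univ a)
      rw [hdA] at ha'
      have hbdd : ∀ b₀ : B, BddAbove (Set.range fun b₁ => ‖h a b₁ - h a' b₁‖) := by
        intro b₀
        refine ⟨M a + M a', ?_⟩
        rintro x ⟨b₁, rfl⟩
        calc ‖h a b₁ - h a' b₁‖
            ≤ ‖h a b₁‖ + ‖h a' b₁‖ := by
              simpa using norm_sub_le_norm_sub_add_norm_sub (h a b₁) 0 (h a' b₁)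
          _ ≤ M a + M a' := add_le_add (hM a b₁) (hM a' b₁)
      have h1 : ‖h a b - h a' b‖ ≤ ε :=
        le_trans (le_ciSup (hbdd b) b) ha'
      have h3 : ‖h a b' - h a' b'‖ ≤ ε :=
        le_trans (le_ciSup (hbdd b) b') ha'
      have h2 : ‖h a' b - h a' b'‖ < δ := by
        have := lt_of_le_of_lt (dist_le_pi_dist (φ b) (φ b') ⟨a', ha'F⟩) hdist
        simpa [hφ, Complex.dist_eq] using this
      have step1 : ‖h a b - h a b'‖
          ≤ ‖h a b - h a' b‖ + ‖h a' b - h a b'‖ :=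
        norm_sub_le_norm_sub_add_norm_sub _ _ _
      have step2 : ‖h a' b - h a b'‖
          ≤ ‖h a' b - h a' b'‖ + ‖h a' b' - h a b'‖ :=
        norm_sub_le_norm_sub_add_norm_sub _ _ _
      have heq : ‖h a' b' - h a b'‖ = ‖h a b' - h a' b'‖ :=
        norm_sub_rev _ _
      simp only [hδdef] at h2
      linarith
  have hle : icov dB Set.univ ρ ≤ (G.card : ℕ∞) := by
    apply sInf_le
    exact ⟨G, ⟨Set.subset_univ _, fun b _ => key b⟩, rfl⟩
  exact ne_top_of_le_ne_top (WithTop.natCast_ne_top _) hle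
end

section
/- Let V be a real vector space, let p be a seminorm on V, and let A ⊆ V be an absolutely convex subset. Let B be a set and h : A × B → ℝ a real-valued function such that h(0,b) = 0 for all b ∈ B, such that sup_{a∈A}|h(a,b)| < ∞ for each b ∈ B and sup_{b∈B}|h(a,b)| < ∞ for each a ∈ A, and such that the semimetric d_A(a,a') := sup_{b∈B}|h(a,b) − h(a',b)| satisfies d_A(a,a') = p(a − a') for all a, a' ∈ A. Define the semimetric d_B(b₁,b₂) := sup_{a∈A}|h(a,b₁) − h(a,b₂)| on B. If the intrinsic covering number N_A(ε) is finite for some ε > 0, then for every δ > 0, N_B^Δ(ε + δ) ≤ (⌈ε·N_A(ε)/δ⌉)^{N_A(ε)}. -/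
/-- Let `V` be a real vector space, `p` a seminorm on `V`, and `A ⊆ V`
a nonempty absolutely convex subset.  Let `h : A × B → ℝ` be bounded in each variable
separately, with `h(0,b) = 0` for all `b`, and suppose the semimetric
`d_A(a,a') := sup_{b∈B} |h(a,b) − h(a',b)|` satisfies `d_A(a,a') = p(a − a')` on `A`;
let `d_B(b₁,b₂) := sup_{a∈A} |h(a,b₁) − h(a,b₂)|`.  If `N_A(ε) = n` is finite for some
`ε > 0`, then for every `δ > 0`, `N_B^Δ(ε + δ) ≤ (⌈ε·N_A(ε)/δ⌉)^(N_A(ε))`. -/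
theorem statement10 {V : Type*} [AddCommGroup V] [Module ℝ V]
    (p : Seminorm ℝ V) (A : Set V) (hAne : A.Nonempty)
    (habsconv : ∀ a ∈ A, ∀ a' ∈ A, ∀ lam mu : ℝ, |lam| + |mu| ≤ 1 →
      lam • a + mu • a' ∈ A)
    {B : Type*} (h : V → B → ℝ)
    (h0 : ∀ b : B, h 0 b = 0)
    (hcol : ∀ b : B, ∃ M : ℝ, ∀ a ∈ A, |h a b| ≤ M)
    (hrow : ∀ a ∈ A, ∃ M : ℝ, ∀ b : B, |h a b| ≤ M)
    (dA : V → V → ℝ)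
    (hdA : ∀ a ∈ A, ∀ a' ∈ A, dA a a' = ⨆ b : B, |h a b - h a' b|)
    (hdp : ∀ a ∈ A, ∀ a' ∈ A, dA a a' = p (a - a'))
    (dB : B → B → ℝ)
    (hdB : ∀ b₁ b₂ : B, dB b₁ b₂ = ⨆ a : A, |h (a : V) b₁ - h (a : V) b₂|)
    (ε : ℝ) (hε : 0 < ε) (n : ℕ) (hn : icov dA A ε = (n : ℕ∞)) :
    ∀ δ : ℝ, 0 < δ →
      dcov dB Set.univ (ε + δ) ≤ ((⌈ε * n / δ⌉₊ : ℕ∞)) ^ n := by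

  intro δ hδ
  -- 0 ∈ A
  have hzero : (0:V) ∈ A := by
    obtain ⟨a, ha⟩ := hAne
    have := habsconv a ha a ha 0 0 (by norm_num)
    simpa using this
  -- extract a covering finset F with card n
  have hSne : ((fun F : Finset V => (F.card : ℕ∞)) ''
      {F : Finset V | ↑F ⊆ A ∧ ∀ x ∈ A, ∃ y ∈ F, dA x y ≤ ε}).Nonempty := by
    by_contra hcon
    rw [Set.not_nonempty_iff_eq_empty] at hcon
    rw [icov, hcon, sInf_empty] at hn
    exact (ENat.coe_ne_top n) hn.symm
  have hmem : (n : ℕ∞) ∈ (fun F : Finset V => (F.card : ℕ∞)) ''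
      {F : Finset V | ↑F ⊆ A ∧ ∀ x ∈ A, ∃ y ∈ F, dA x y ≤ ε} := by
    rw [← hn, icov]; exact csInf_mem hSne
  obtain ⟨F, ⟨hFA, hFcov⟩, hcard⟩ := hmem
  have hcardn : F.card = n := by
    have : ((F.card : ℕ∞)) = (n : ℕ∞) := hcard
    exact_mod_cast this
  -- pointwise bound by dA
  have hpt : ∀ a ∈ A, ∀ a' ∈ A, ∀ b : B, |h a b - h a' b| ≤ dA a a' := by
    intro a ha a' ha' b
    rw [hdA a ha a' ha']
    obtain ⟨M, hM⟩ := hrow a ha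
    obtain ⟨M', hM'⟩ := hrow a' ha'
    refine le_ciSup (f := fun b => |h a b - h a' b|) ⟨M + M', ?_⟩ b
    rintro _ ⟨b', rfl⟩
    calc |h a b' - h a' b'| ≤ |h a b'| + |h a' b'| := abs_sub _ _
      _ ≤ M + M' := add_le_add (hM b') (hM' b')
  have hb : ∀ a ∈ A, ∀ b : B, |h a b| ≤ p a := by
    intro a ha b
    have h1 := hpt a ha 0 hzero b
    rw [hdp a ha 0 hzero] at h1
    simpa [h0 b] using h1
  -- n ≥ 1
  have hn1 : 1 ≤ n := by
    obtain ⟨a, ha⟩ := hAne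
    obtain ⟨y, hy, -⟩ := hFcov a ha
    have : 0 < F.card := Finset.card_pos.mpr ⟨y, hy⟩
    omega
  have hnR : (0:ℝ) < n := by exact_mod_cast hn1
  -- p a ≤ ε * n on A
  have hpA : ∀ a ∈ A, p a ≤ ε * n := by
    intro a ha
    by_contra hcon
    push_neg at hcon
    set x : Fin (n+1) → V := fun j => (-1 + 2 * (j:ℝ) / n) • a with hx
    have hxA : ∀ j, x j ∈ A := by
      intro j
      have hj : (j:ℝ) ≤ n := by exact_mod_cast Nat.lt_succ_iff.mp j.isLt
      have hj0 : (0:ℝ) ≤ (j:ℝ) := Nat.cast_nonneg _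
      have h1 : |(-1 + 2 * (j:ℝ) / n)| ≤ 1 := by
        rw [abs_le]
        constructor
        · have : (0:ℝ) ≤ 2 * (j:ℝ) / n := by positivity
          linarith
        · have : 2 * (j:ℝ) / n ≤ 2 := by
            rw [div_le_iff₀ hnR]; linarith
          linarith
      have := habsconv a ha a ha _ 0 (by simpa using h1)
      simpa using this
    have hdist : ∀ j k : Fin (n+1), j ≠ k → 2 * ε < p (x j - x k) := by
      intro j k hjk
      have hsub : x j - x k = ((-1 + 2 * (j:ℝ) / n) - (-1 + 2 * (k:ℝ) / n)) • a := by
        rw [hx, sub_smul]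
      have hone : (1:ℝ) ≤ |(j:ℝ) - (k:ℝ)| := by
        have hne : ((j:ℕ):ℤ) - ((k:ℕ):ℤ) ≠ 0 := by
          intro hcontra
          exact hjk (Fin.ext (by omega))
        have h1 := Int.one_le_abs hne
        have h2 : (1:ℝ) ≤ |(((j:ℕ):ℤ):ℝ) - (((k:ℕ):ℤ):ℝ)| := by
          rw [← Int.cast_sub, ← Int.cast_abs]
          exact_mod_cast h1
        push_cast at h2
        exact h2
      rw [hsub, map_smul_eq_mul, Real.norm_eq_abs]
      have hc : (2:ℝ) / n ≤ |(-1 + 2 * (j:ℝ) / n) - (-1 + 2 * (k:ℝ) / n)| := by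
        have : (-1 + 2 * (j:ℝ) / n) - (-1 + 2 * (k:ℝ) / n) = 2 * ((j:ℝ) - (k:ℝ)) / n := by
          ring
        rw [this, abs_div, abs_of_pos hnR, abs_mul, abs_two]
        gcongr
        nlinarith
      have hp0 : 0 ≤ p a := apply_nonneg p a
      calc 2 * ε = (2 / n) * (ε * n) := by field_simp
        _ < (2 / n) * p a := by
            apply mul_lt_mul_of_pos_left hcon (by positivity)
        _ ≤ |(-1 + 2 * (j:ℝ) / n) - (-1 + 2 * (k:ℝ) / n)| * p a := by
            apply mul_le_mul_of_nonneg_right hc hp0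
    have hcov : ∀ j : Fin (n+1), ∃ y ∈ F, dA (x j) y ≤ ε :=
      fun j => hFcov (x j) (hxA j)
    choose φ hφF hφd using hcov
    obtain ⟨j, -, k, -, hjk, heq⟩ := Finset.exists_ne_map_eq_of_card_lt_of_maps_to
      (s := (Finset.univ : Finset (Fin (n+1)))) (t := F)
      (by simp [hcardn]) (fun j _ => hφF j)
    have h1 : p (x j - φ j) ≤ ε := by
      rw [← hdp _ (hxA j) _ (hFA (hφF j))]; exact hφd j
    have h2 : p (x k - φ k) ≤ ε := by
      rw [← hdp _ (hxA k) _ (hFA (hφF k))]; exact hφd k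
    have h3 : p (x j - x k) ≤ 2 * ε := by
      have : x j - x k = (x j - φ j) + (φ k - x k) := by rw [heq]; abel
      rw [this]
      calc p ((x j - φ j) + (φ k - x k)) ≤ p (x j - φ j) + p (φ k - x k) := map_add_le_add p _ _
        _ = p (x j - φ j) + p (x k - φ k) := by rw [map_sub_rev p (φ k) (x k)]
        _ ≤ ε + ε := add_le_add h1 h2
        _ = 2 * ε := by ring
    exact absurd h3 (not_le.mpr (hdist j k hjk))
  -- main construction
  set m := ⌈ε * (n:ℝ) / δ⌉₊ with hm
  have hm1 : 1 ≤ m := Nat.one_le_iff_ne_zero.mpr (by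
    rw [hm]
    exact Nat.ceil_pos.mpr (by positivity) |>.ne')
  have hεnδm : ε * n ≤ δ * m := by
    have := Nat.le_ceil (ε * (n:ℝ) / δ)
    rw [← hm] at this
    calc ε * n = δ * (ε * (n:ℝ) / δ) := by field_simp
      _ ≤ δ * m := by apply mul_le_mul_of_nonneg_left this hδ.le
  haveI : Nonempty ↥A := hAne.to_subtype
  have hkey : ((m ^ n : ℕ) : ℕ∞) ∈ (fun k : ℕ => (k : ℕ∞)) ''
      {k : ℕ | ∃ G : Fin k → Set B,
        (∀ i, ∀ x ∈ G i, ∀ y ∈ G i, dB x y ≤ 2 * (ε + δ)) ∧ Set.univ ⊆ ⋃ i, G i} := by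
    refine ⟨m ^ n, ?_, rfl⟩
    classical
    have hcardF : Fintype.card (↥F → Fin m) = m ^ n := by
      rw [Fintype.card_fun, Fintype.card_fin, Fintype.card_coe, hcardn]
    set e : (↥F → Fin m) ≃ Fin (m ^ n) := Fintype.equivFinOfCardEq hcardF with he
    refine ⟨fun i => {b : B | ∀ y : ↥F,
      h (y:V) b ∈ Set.Icc (-(ε*n) + 2*δ*((e.symm i y : ℕ):ℝ))
        (-(ε*n) + 2*δ*((e.symm i y : ℕ):ℝ) + 2*δ)}, ?_, ?_⟩
    · -- diameter bound
      intro i b₁ hb₁ b₂ hb₂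
      rw [hdB]
      apply ciSup_le
      intro a
      obtain ⟨y, hyF, hyd⟩ := hFcov (a:V) a.2
      have hyA : (y:V) ∈ A := hFA hyF
      have t1 : |h (a:V) b₁ - h y b₁| ≤ ε := (hpt _ a.2 _ hyA b₁).trans hyd
      have t3 : |h (a:V) b₂ - h y b₂| ≤ ε := (hpt _ a.2 _ hyA b₂).trans hyd
      have t2 : |h y b₁ - h y b₂| ≤ 2*δ := by
        have u1 := hb₁ ⟨y, hyF⟩
        have u2 := hb₂ ⟨y, hyF⟩
        simp only [Set.mem_Icc] at u1 u2
        rw [abs_le]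
        constructor <;> linarith [u1.1, u1.2, u2.1, u2.2]
      calc |h (a:V) b₁ - h (a:V) b₂|
          = |(h (a:V) b₁ - h y b₁) + (h y b₁ - h y b₂) + (h y b₂ - h (a:V) b₂)| := by
            ring_nf
        _ ≤ |(h (a:V) b₁ - h y b₁) + (h y b₁ - h y b₂)| + |h y b₂ - h (a:V) b₂| :=
            abs_add_le _ _
        _ ≤ (|h (a:V) b₁ - h y b₁| + |h y b₁ - h y b₂|) + |h y b₂ - h (a:V) b₂| := by
            gcongr; exact abs_add_le _ _
        _ ≤ (ε + 2*δ) + ε := by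
            have t3' : |h y b₂ - h (a:V) b₂| ≤ ε := by rw [abs_sub_comm]; exact t3
            gcongr
        _ = 2 * (ε + δ) := by ring
    · -- coverage
      intro b _
      have hfin : ∀ y : ↥F, min ⌊(h (y:V) b + ε*n)/(2*δ)⌋₊ (m-1) < m := by
        intro y
        have := min_le_right ⌊(h (y:V) b + ε*n)/(2*δ)⌋₊ (m-1)
        omega
      refine Set.mem_iUnion.mpr
        ⟨e (fun y => ⟨min ⌊(h (y:V) b + ε*n)/(2*δ)⌋₊ (m-1), hfin y⟩), ?_⟩
      intro y
      rw [he, Equiv.symm_apply_apply]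
      have hyA : (y:V) ∈ A := hFA y.2
      have hbd := abs_le.mp ((hb _ hyA b).trans (hpA _ hyA))
      have h2δ : (0:ℝ) < 2*δ := by linarith
      have ht0 : (0:ℝ) ≤ h (y:V) b + ε*n := by linarith [hbd.1]
      have ht2 : h (y:V) b + ε*n ≤ 2*(δ*m) := by linarith [hbd.2]
      simp only [Set.mem_Icc, Fin.val_mk]
      by_cases hc : ⌊(h (y:V) b + ε*n)/(2*δ)⌋₊ ≤ m - 1
      · rw [min_eq_left hc]
        have h1 : (⌊(h (y:V) b + ε*n)/(2*δ)⌋₊ : ℝ) ≤ (h (y:V) b + ε*n)/(2*δ) :=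
          Nat.floor_le (by positivity)
        have h2 := (le_div_iff₀ h2δ).mp h1
        have h3 : (h (y:V) b + ε*n)/(2*δ) < (⌊(h (y:V) b + ε*n)/(2*δ)⌋₊ : ℝ) + 1 :=
          Nat.lt_floor_add_one _
        have h4 := (div_lt_iff₀ h2δ).mp h3
        constructor <;> nlinarith
      · rw [min_eq_right (by omega)]
        push_neg at hc
        have hge : m ≤ ⌊(h (y:V) b + ε*n)/(2*δ)⌋₊ := by omega
        have h1 : (m:ℝ) ≤ (h (y:V) b + ε*n)/(2*δ) :=
          (Nat.le_floor_iff (by positivity)).mp hge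
        have h2 := (le_div_iff₀ h2δ).mp h1
        have hm1' : ((m-1 : ℕ):ℝ) = (m:ℝ) - 1 := by
          rw [Nat.cast_sub hm1, Nat.cast_one]
        rw [hm1']
        constructor <;> nlinarith
  rw [dcov]
  calc sInf _ ≤ ((m ^ n : ℕ) : ℕ∞) := sInf_le hkey
    _ = ((m : ℕ∞)) ^ n := by push_cast; rfl
end
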